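/- Security of Wegman–Carter authentication with key recycling (Theorem 1): let M be a finite type, B = Fin b_H → ZMod 2, and F a nonempty finite ε-ASU₂ family of functions M → B, i.e., for all m₁ ≠ m₂ and all b₁, b₂ ∈ B, |{f ∈ F : f(m₁) = b₁ ∧ f(m₂) = b₂}| ≤ ε·|F|/2^{b_H}. Fix n ≥ 1, messages m₁, …, m_n ∈ M, a forged message m_E ∈ M with m_E ≠ m₁, and an arbitrary (deterministic) adversary strategy G : Bⁿ → B. Then the number of keys (f, k₁, …, k_n) ∈ F × Bⁿ such that f(m_E) + k₁ = G(f(m₁)+k₁, …, f(m_n)+k_n) is at most ε·|F|·2^{n·b_H}; equivalently, the probability over a uniformly random key that Eve's guessed tag for the forged message m_E (in place of message m₁) is correct is at most ε. -/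

import Mathlib

/-- Security of Wegman–Carter authentication with key recycling: against an
ε-ASU₂ family with one-time-pad encrypted tags, any deterministic substitution
strategy for the first message succeeds for at most ε·|F|·2^{n·b_H} of the keys
(f, k₁, …, k_n) ∈ F × Bⁿ, i.e., with probability at most ε over a uniform key. -/
theorem wegman_carter_security {M : Type*} [Fintype M] (bH : ℕ) (hbH : 0 < bH)
    (F : Finset (M → (Fin bH → ZMod 2))) (hF : F.Nonempty) (ε : ℝ)
    (hASU : ∀ m₁ m₂ : M, m₁ ≠ m₂ → ∀ b₁ b₂ : Fin bH → ZMod 2,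
      ((F.filter (fun f => f m₁ = b₁ ∧ f m₂ = b₂)).card : ℝ) ≤ ε * F.card / 2 ^ bH)
    (n : ℕ) (hn : 0 < n) (m : Fin n → M) (mE : M) (hmE : mE ≠ m ⟨0, hn⟩)
    (G : (Fin n → (Fin bH → ZMod 2)) → (Fin bH → ZMod 2)) :
    (((F ×ˢ (Finset.univ : Finset (Fin n → (Fin bH → ZMod 2)))).filter
        (fun p => p.1 mE + p.2 ⟨0, hn⟩ =
          G (fun i => p.1 (m i) + p.2 i))).card : ℝ)
      ≤ ε * F.card * 2 ^ (n * bH) := by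
  classical
  set i0 : Fin n := ⟨0, hn⟩ with hi0
  have hinv : ∀ a b : Fin bH → ZMod 2, a + (a + b) = b := by
    intro a b; funext j
    have h2 : ∀ x y : ZMod 2, x + (x + y) = y := by decide
    exact h2 _ _
  -- Step 1: reparametrize keys by observed tags
  have hcard :
      ((F ×ˢ (Finset.univ : Finset (Fin n → (Fin bH → ZMod 2)))).filter
        (fun p => p.1 mE + p.2 i0 = G (fun i => p.1 (m i) + p.2 i))).card
      = ((F ×ˢ (Finset.univ : Finset (Fin n → (Fin bH → ZMod 2)))).filter
        (fun p => p.1 mE + (p.1 (m i0) + p.2 i0) = G p.2)).card := by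
    apply Finset.card_nbij'
      (fun p : (M → Fin bH → ZMod 2) × (Fin n → Fin bH → ZMod 2) =>
        (p.1, fun i => p.1 (m i) + p.2 i))
      (fun p : (M → Fin bH → ZMod 2) × (Fin n → Fin bH → ZMod 2) =>
        (p.1, fun i => p.1 (m i) + p.2 i))
    · intro p hp
      change _ ∈ Finset.filter _ _ at hp ⊢
      simp only [Finset.mem_filter, Finset.mem_product, Finset.mem_univ, and_true] at hp ⊢
      refine ⟨hp.1, ?_⟩
      simpa [hinv] using hp.2
    · intro p hp
      change _ ∈ Finset.filter _ _ at hp ⊢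
      simp only [Finset.mem_filter, Finset.mem_product, Finset.mem_univ, and_true] at hp ⊢
      refine ⟨hp.1, ?_⟩
      simpa [hinv] using hp.2
    · intro p hp
      simp [hinv]
    · intro p hp
      simp [hinv]
  rw [hcard]
  -- Step 2: count fiberwise over the tags
  have hsum :
      ((F ×ˢ (Finset.univ : Finset (Fin n → (Fin bH → ZMod 2)))).filter
        (fun p => p.1 mE + (p.1 (m i0) + p.2 i0) = G p.2)).card
      = ∑ t : (Fin n → (Fin bH → ZMod 2)),
          (F.filter (fun f => f mE + (f (m i0) + t i0) = G t)).card := by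
    rw [Finset.card_filter, Finset.sum_product_right]
    exact Finset.sum_congr rfl fun t _ => (Finset.card_filter _ _).symm
  rw [hsum]
  -- Step 3: bound each inner count using the ASU₂ property
  have hub : ∀ t : Fin n → (Fin bH → ZMod 2),
      ((F.filter (fun f => f mE + (f (m i0) + t i0) = G t)).card : ℝ)
        ≤ 2 ^ bH * (ε * F.card / 2 ^ bH) := by
    intro t
    have hsub : F.filter (fun f => f mE + (f (m i0) + t i0) = G t) ⊆
        (Finset.univ : Finset (Fin bH → ZMod 2)).biUnion
          (fun b => F.filter (fun f => f (m i0) = b ∧ f mE = b + (t i0 + G t))) := by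
      intro f hf
      simp only [Finset.mem_filter] at hf
      refine Finset.mem_biUnion.2 ⟨f (m i0), Finset.mem_univ _,
        Finset.mem_filter.2 ⟨hf.1, rfl, ?_⟩⟩
      funext j
      have h2 : ∀ a c d e : ZMod 2, a + (c + d) = e → a = c + (d + e) := by decide
      exact h2 _ _ _ _ (congrFun hf.2 j)
    calc ((F.filter (fun f => f mE + (f (m i0) + t i0) = G t)).card : ℝ)
        ≤ (((Finset.univ : Finset (Fin bH → ZMod 2)).biUnion
            (fun b => F.filter (fun f => f (m i0) = b ∧ f mE = b + (t i0 + G t)))).card : ℝ) := by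
          exact_mod_cast Finset.card_le_card hsub
      _ ≤ ∑ b : Fin bH → ZMod 2,
            ((F.filter (fun f => f (m i0) = b ∧ f mE = b + (t i0 + G t))).card : ℝ) := by
          exact_mod_cast Finset.card_biUnion_le
      _ ≤ ∑ _b : Fin bH → ZMod 2, ε * F.card / 2 ^ bH := by
          refine Finset.sum_le_sum fun b _ => ?_
          exact hASU (m i0) mE (Ne.symm hmE) b (b + (t i0 + G t))
      _ = 2 ^ bH * (ε * F.card / 2 ^ bH) := by
          simp [Finset.sum_const, Finset.card_univ]
  -- Put everything together
  calc ((∑ t : (Fin n → (Fin bH → ZMod 2)),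
          (F.filter (fun f => f mE + (f (m i0) + t i0) = G t)).card : ℕ) : ℝ)
      = ∑ t : (Fin n → (Fin bH → ZMod 2)),
          ((F.filter (fun f => f mE + (f (m i0) + t i0) = G t)).card : ℝ) := by
        push_cast; ring
    _ ≤ ∑ _t : (Fin n → (Fin bH → ZMod 2)), 2 ^ bH * (ε * F.card / 2 ^ bH) :=
        Finset.sum_le_sum fun t _ => hub t
    _ = ((2 : ℝ) ^ bH) ^ n * (2 ^ bH * (ε * F.card / 2 ^ bH)) := by
        rw [Finset.sum_const, Finset.card_univ, nsmul_eq_mul]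
        have hc : ((Fintype.card (Fin n → Fin bH → ZMod 2) : ℕ) : ℝ) = ((2 : ℝ) ^ bH) ^ n := by
          simp [Fintype.card_fun]
        rw [hc]
    _ = ε * F.card * 2 ^ (n * bH) := by
        have h2 : (2 : ℝ) ^ bH * (ε * F.card / 2 ^ bH) = ε * F.card := by
          have : (2 : ℝ) ^ bH ≠ 0 := by positivity
          field_simp
        rw [h2, ← pow_mul, mul_comm bH n]
        ring
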